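/- Assume 2^λ = 𝔠 for every infinite cardinal λ < 𝔠, and assume that every strongly separated topological space of cardinality 𝔠 contains an uncountable discrete subspace. Then every infinite regular Hausdorff topological space X of countable spread satisfies o(X) = 𝔠, i.e., the family of all open subsets of X has cardinality exactly 𝔠. -/

import Mathlib

universe u

open Cardinal

/-- A topological space is *strongly left separated* if it has a well-ordering `r` such that
every point `x` has a closed neighborhood `W x` (a closed set containing `x` in its interior)
containing no `r`-predecessor of `x`. -/
def StronglyLeftSeparated (X : Type u) [TopologicalSpace X] : Prop :=
  ∃ r : X → X → Prop, IsWellOrder X r ∧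
    ∃ W : X → Set X, ∀ x : X, IsClosed (W x) ∧ x ∈ interior (W x) ∧
      ∀ y : X, r y x → y ∉ W x

/-- A topological space is *strongly right separated* if it has a well-ordering `r` such that
every point `x` has a closed neighborhood `W x` containing no `r`-successor of `x`. -/
def StronglyRightSeparated (X : Type u) [TopologicalSpace X] : Prop :=
  ∃ r : X → X → Prop, IsWellOrder X r ∧
    ∃ W : X → Set X, ∀ x : X, IsClosed (W x) ∧ x ∈ interior (W x) ∧
      ∀ y : X, r x y → y ∉ W x

/-- A space is *strongly separated* if it is strongly left or strongly right separated. -/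
def StronglySeparated (X : Type u) [TopologicalSpace X] : Prop :=
  StronglyLeftSeparated X ∨ StronglyRightSeparated X

open Set Ordinal

lemma aux_discrete_image {X : Type u} [TopologicalSpace X] (S : Set X) (D : Set ↥S)
    (hD : DiscreteTopology ↥D) : DiscreteTopology ↥(Subtype.val '' D : Set X) := by
  have hemb : Topology.IsEmbedding ((Subtype.val : ↥S → X) ∘ (Subtype.val : ↥D → ↥S)) :=
    Topology.IsEmbedding.subtypeVal.comp Topology.IsEmbedding.subtypeVal
  have h1 : Set.range ((Subtype.val : ↥S → X) ∘ (Subtype.val : ↥D → ↥S))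
      = (Subtype.val '' D : Set X) := by
    rw [Set.range_comp, Subtype.range_val]
  have h2 := hemb.toHomeomorph.symm.isEmbedding.discreteTopology
  rwa [h1] at h2


lemma aux_rec {X : Type u} (Y : Set X) (B : Set X → Set X)
    (hsub : ∀ S : Set X, S ⊆ B S)
    (hB : ∀ S : Set X, S ⊆ Y → #↥S < continuum → ∃ x ∈ Y, x ∉ B S) :
    ∃ f : continuum.{u}.ord.ToType → X, Function.Injective f ∧
      ∀ i, f i ∈ Y ∧ f i ∉ B (f '' {j | j < i}) := by
  classical
  have hne : Nonempty X := by
    obtain ⟨x, _, _⟩ := hB ∅ (empty_subset Y)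
      (by rw [Cardinal.mk_emptyCollection]
          exact lt_of_lt_of_le Cardinal.aleph0_pos Cardinal.aleph0_le_continuum)
    exact ⟨x⟩
  set ι := continuum.{u}.ord.ToType with hι
  have wf : WellFounded ((· < ·) : ι → ι → Prop) := IsWellFounded.wf
  set F : ∀ i : ι, (∀ j : ι, j < i → X) → X := fun i IH =>
    if h : ∃ x, x ∈ Y ∧ x ∉ B {x | ∃ j, ∃ hj : j < i, IH j hj = x} then h.choose
    else Classical.arbitrary X with hF
  set f : ι → X := wf.fix F with hf
  have hfix : ∀ i : ι, f i =
      (if h : ∃ x, x ∈ Y ∧ x ∉ B (f '' {j | j < i}) then h.choose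
       else Classical.arbitrary X) := by
    intro i
    have h1 : f i = F i fun j _ => f j := by
      rw [hf]; exact WellFounded.fix_eq wf F i
    rw [h1, hF]
    have h2 : {x | ∃ j, ∃ hj : j < i, f j = x} = f '' {j | j < i} := by
      ext x
      simp only [Set.mem_image, Set.mem_setOf_eq, exists_prop]
    simp only [h2]
  have hcard : ∀ i : ι, #↥(f '' {j | j < i}) < continuum := by
    intro i
    refine lt_of_le_of_lt (Cardinal.mk_image_le) ?_
    exact Cardinal.mk_Iio_ord_toType i
  have main : ∀ i : ι, f i ∈ Y ∧ f i ∉ B (f '' {j | j < i}) := by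
    refine fun i => wf.induction (C := fun i => f i ∈ Y ∧ f i ∉ B (f '' {j | j < i})) i ?_
    intro i IH
    have hsubY : f '' {j | j < i} ⊆ Y := by
      rintro _ ⟨j, hj, rfl⟩; exact (IH j hj).1
    have hex : ∃ x, x ∈ Y ∧ x ∉ B (f '' {j | j < i}) := by
      obtain ⟨x, h1, h2⟩ := hB _ hsubY (hcard i); exact ⟨x, h1, h2⟩
    rw [hfix i, dif_pos hex]
    exact ⟨hex.choose_spec.1, hex.choose_spec.2⟩
  have hinj : Function.Injective f := by
    intro a b hab
    by_contra hne'
    rcases lt_or_gt_of_ne hne' with h | h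
    · exact (main b).2 (hab ▸ hsub _ ⟨a, h, rfl⟩)
    · exact (main a).2 (hab ▸ hsub _ ⟨b, h, hab.symm ▸ rfl⟩)
  exact ⟨f, hinj, main⟩

-- pull back well-order along injection
lemma aux_wo {X : Type u} (f : continuum.{u}.ord.ToType → X) (hinj : Function.Injective f) :
    IsWellOrder ↥(Set.range f)
      (fun a b => (Equiv.ofInjective f hinj).symm a < (Equiv.ofInjective f hinj).symm b) := by
  set e := Equiv.ofInjective f hinj
  haveI h1 : IsTrichotomous ↥(Set.range f) (fun a b => e.symm a < e.symm b) := by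
    constructor
    intro a b
    intro hab hba
    exact e.symm.injective (le_antisymm (not_lt.1 hba) (not_lt.1 hab))
  haveI h2 : IsTrans ↥(Set.range f) (fun a b => e.symm a < e.symm b) :=
    ⟨fun a b c => lt_trans⟩
  haveI h3 : IsWellFounded ↥(Set.range f) (fun a b => e.symm a < e.symm b) :=
    ⟨InvImage.wf _ IsWellFounded.wf⟩
  exact ⟨⟩

lemma aux_coe {X : Type u} (f : continuum.{u}.ord.ToType → X) (hinj : Function.Injective f)
    (a : ↥(Set.range f)) : (a : X) = f ((Equiv.ofInjective f hinj).symm a) :=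
  (Equiv.apply_ofInjective_symm hinj a).symm

lemma aux_left {X : Type u} [TopologicalSpace X] [RegularSpace X]
    (hno : ∀ S : Set X, #↥S = continuum → ¬ StronglyLeftSeparated ↥S) (Y : Set X) :
    ∃ D : Set X, D ⊆ Y ∧ #↥D < continuum ∧ Y ⊆ closure D := by
  by_contra hcon
  push_neg at hcon
  obtain ⟨f, hinj, hmain⟩ := aux_rec Y closure (fun S => subset_closure)
    (by
      intro S hS hc
      have := hcon S hS hc
      rw [Set.not_subset] at this
      obtain ⟨x, hx1, hx2⟩ := this
      exact ⟨x, hx1, hx2⟩)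
  set e := Equiv.ofInjective f hinj with he
  have hWex : ∀ a : ↥(Set.range f), ∃ W : Set X, IsClosed W ∧ (a : X) ∈ interior W ∧
      ∀ j, j < e.symm a → f j ∉ W := by
    intro a
    have hcl : (a : X) ∉ closure (f '' {j | j < e.symm a}) := by
      rw [aux_coe f hinj a]; exact (hmain (e.symm a)).2
    have hm : (closure (f '' {j | j < e.symm a}))ᶜ ∈ nhds (a : X) :=
      isClosed_closure.isOpen_compl.mem_nhds hcl
    obtain ⟨W, ⟨hW1, hW2⟩, hW3⟩ := (closed_nhds_basis (a : X)).mem_iff.1 hm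
    exact ⟨W, hW2, mem_interior_iff_mem_nhds.2 hW1,
      fun j hj hmem => (hW3 hmem) (subset_closure ⟨j, hj, rfl⟩)⟩
  choose W hWc hWi hWe using hWex
  have hsls : StronglyLeftSeparated ↥(Set.range f) := by
    refine ⟨_, aux_wo f hinj, fun a => Subtype.val ⁻¹' (W a), fun a => ⟨?_, ?_, ?_⟩⟩
    · exact (hWc a).preimage continuous_subtype_val
    · exact interior_maximal (Set.preimage_mono interior_subset)
        ((isOpen_interior).preimage continuous_subtype_val) (hWi a)
    · intro b hb hmem
      exact hWe a (e.symm b) hb (by rwa [← aux_coe f hinj b])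
  exact hno (Set.range f) (by rw [Cardinal.mk_range_eq f hinj, Cardinal.mk_ord_toType]) hsls

lemma aux_lindelof {X : Type u} [TopologicalSpace X] [RegularSpace X]
    (hno : ∀ S : Set X, #↥S = continuum → ¬ StronglyRightSeparated ↥S)
    (Y : Set X) (C : Set (Set X)) (hop : ∀ U ∈ C, IsOpen U) (hcov : Y ⊆ ⋃₀ C) :
    ∃ C' : Set (Set X), C' ⊆ C ∧ #↥C' < continuum ∧ Y ⊆ ⋃₀ C' := by
  by_contra hcon
  push_neg at hcon
  classical
  set u : X → Set X := fun x => if h : ∃ U ∈ C, x ∈ U then h.choose else ∅ with hu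
  have hu1 : ∀ x ∈ Y, u x ∈ C ∧ x ∈ u x := by
    intro x hx
    obtain ⟨U, hU, hxU⟩ := hcov hx
    have h : ∃ U ∈ C, x ∈ U := ⟨U, hU, hxU⟩
    rw [hu]
    simp only [dif_pos h]
    exact ⟨h.choose_spec.1, h.choose_spec.2⟩
  set B : Set X → Set X := fun S => S ∪ ⋃ x ∈ S, u x with hBdef
  obtain ⟨f, hinj, hmain⟩ := aux_rec Y B (fun S x hx => Or.inl hx)
    (by
      intro S hS hc
      have hC' : (u '' S) ⊆ C := by rintro _ ⟨x, hx, rfl⟩; exact (hu1 x (hS hx)).1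
      have hcard : #↥(u '' S) < continuum := lt_of_le_of_lt Cardinal.mk_image_le hc
      have hns := hcon (u '' S) hC' hcard
      rw [Set.not_subset] at hns
      obtain ⟨x, hx1, hx2⟩ := hns
      refine ⟨x, hx1, ?_⟩
      rintro (hxS | hxU)
      · exact hx2 ⟨u x, ⟨x, hxS, rfl⟩, (hu1 x hx1).2⟩
      · obtain ⟨y, hy, hxy⟩ := Set.mem_iUnion₂.1 hxU
        exact hx2 ⟨u y, ⟨y, hy, rfl⟩, hxy⟩)
  set e := Equiv.ofInjective f hinj with he
  have hWex : ∀ a : ↥(Set.range f), ∃ W : Set X, IsClosed W ∧ (a : X) ∈ interior W ∧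
      ∀ j, e.symm a < j → f j ∉ W := by
    intro a
    have h1 : u (f (e.symm a)) ∈ C ∧ f (e.symm a) ∈ u (f (e.symm a)) :=
      hu1 _ (hmain (e.symm a)).1
    have hm : u (f (e.symm a)) ∈ nhds (f (e.symm a)) := (hop _ h1.1).mem_nhds h1.2
    obtain ⟨W, ⟨hW1, hW2⟩, hW3⟩ := (closed_nhds_basis (f (e.symm a))).mem_iff.1 hm
    refine ⟨W, hW2, by rw [aux_coe f hinj a]; exact mem_interior_iff_mem_nhds.2 hW1, ?_⟩
    intro j hj hmem
    exact (hmain j).2 (Or.inr (Set.mem_biUnion ⟨e.symm a, hj, rfl⟩ (hW3 hmem)))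
  choose W hWc hWi hWe using hWex
  have hsrs : StronglyRightSeparated ↥(Set.range f) := by
    refine ⟨_, aux_wo f hinj, fun a => Subtype.val ⁻¹' (W a), fun a => ⟨?_, ?_, ?_⟩⟩
    · exact (hWc a).preimage continuous_subtype_val
    · exact interior_maximal (Set.preimage_mono interior_subset)
        ((isOpen_interior).preimage continuous_subtype_val) (hWi a)
    · intro b hb hmem
      exact hWe a (e.symm b) hb (by rwa [← aux_coe f hinj b])
  exact hno (Set.range f) (by rw [Cardinal.mk_range_eq f hinj, Cardinal.mk_ord_toType]) hsrs


lemma aux_reg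
    (hpow : ∀ lam : Cardinal.{u}, ℵ₀ ≤ lam → lam < continuum → (2 : Cardinal) ^ lam = continuum) :
    (continuum.{u}.ord).cof = continuum := by
  refine le_antisymm (Ordinal.cof_ord_le _) ?_
  by_contra hlt
  push_neg at hlt
  set lam := max (continuum.{u}.ord).cof ℵ₀ with hlam
  have h1 : ℵ₀ ≤ lam := le_max_right _ _
  have h2 : lam < continuum := max_lt hlt aleph0_lt_continuum
  have h3 := Cardinal.lt_cof_power h1 (one_lt_two)
  rw [hpow lam h1 h2] at h3
  exact absurd h3 (not_lt.2 (le_max_left _ _))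

lemma aux_two_pow_le
    (hpow : ∀ lam : Cardinal.{u}, ℵ₀ ≤ lam → lam < continuum → (2 : Cardinal) ^ lam = continuum)
    (lam : Cardinal.{u}) (h : lam < continuum) : (2 : Cardinal) ^ lam ≤ continuum := by
  rcases le_or_gt ℵ₀ lam with h1 | h1
  · exact (hpow lam h1 h).le
  · exact le_of_lt (lt_of_lt_of_le
      (Cardinal.power_lt_aleph0 (by exact_mod_cast Cardinal.nat_lt_aleph0 2) h1)
      aleph0_le_continuum)

lemma aux_cpow
    (hpow : ∀ lam : Cardinal.{u}, ℵ₀ ≤ lam → lam < continuum → (2 : Cardinal) ^ lam = continuum)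
    (lam : Cardinal.{u}) (hlam : lam < continuum) : continuum.{u} ^ lam ≤ continuum := by
  rcases le_or_gt lam ℵ₀ with h | h
  · calc continuum.{u} ^ lam ≤ continuum ^ ℵ₀ :=
          power_le_power_left continuum_ne_zero h
      _ = continuum := continuum_power_aleph0
  · have h1 : ℵ₀ ≤ lam := h.le
    refine le_of_eq ?_
    calc continuum.{u} ^ lam = ((2 : Cardinal) ^ lam) ^ lam := by rw [hpow lam h1 hlam]
      _ = (2 : Cardinal) ^ (lam * lam) := (Cardinal.power_mul).symm
      _ = (2 : Cardinal) ^ lam := by rw [Cardinal.mul_eq_self h1]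
      _ = continuum := hpow lam h1 hlam

lemma aux_lt_cof {α : Type u} [LinearOrder α] [WellFoundedLT α] (hwo : IsWellOrder α (· < ·))
    {S : Set α} (h : #S < (@Ordinal.type α (· < ·) hwo).cof) : ∃ a, ∀ b ∈ S, b < a := by
  rw [show (@Ordinal.type α (· < ·) hwo) = typeLT α from rfl, Ordinal.cof_type] at h
  by_contra hc
  push_neg at hc
  exact absurd (Order.cof_le (s := S) hc) (not_le.2 h)

lemma aux_count {T : Type u}
    (hpow : ∀ lam : Cardinal.{u}, ℵ₀ ≤ lam → lam < continuum → (2 : Cardinal) ^ lam = continuum)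
    (hT : #T ≤ continuum.{u}) :
    #{S : Set T // #↥S < continuum} ≤ continuum := by
  rcases lt_or_eq_of_le hT with h | h
  · refine le_trans (Cardinal.mk_subtype_le _) ?_
    rw [Cardinal.mk_set]
    exact aux_two_pow_le hpow _ h
  · obtain ⟨g⟩ := Cardinal.eq.1 (h.trans (Cardinal.mk_ord_toType continuum).symm)
    haveI hwo : IsWellOrder (continuum.{u}.ord.ToType) (· < ·) := isWellOrder_lt
    have hcof : (@Ordinal.type (continuum.{u}.ord.ToType) (· < ·) hwo).cof = continuum := by
      rw [Ordinal.type_toType]; exact aux_reg hpow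
    have hbnd' : ∀ S : {S : Set T // #↥S < continuum}, ∃ b : continuum.{u}.ord.ToType, ∀ x ∈ S.val, g x < b := by
      intro S
      have hlt : #↥(g '' S.val) < (@Ordinal.type (continuum.{u}.ord.ToType) (· < ·) hwo).cof := by
        rw [hcof]; exact lt_of_le_of_lt Cardinal.mk_image_le S.prop
      obtain ⟨b, hb⟩ := aux_lt_cof hwo hlt
      exact ⟨b, fun x hx => hb (g x) ⟨x, hx, rfl⟩⟩
    choose bnd hbnd using hbnd'
    set Ψ : {S : Set T // #↥S < continuum} → Σ i : continuum.{u}.ord.ToType, Set ↥(Set.Iio i) :=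
      fun S => ⟨bnd S, {x : ↥(Set.Iio (bnd S)) | g.symm ↑x ∈ S.val}⟩ with hΨ
    have key : ∀ S S' : {S : Set T // #↥S < continuum},
        Subtype.val '' (Ψ S).2 = Subtype.val '' (Ψ S').2 → S.val ⊆ S'.val := by
      intro S S' h12 t ht
      have hmem : g t ∈ Subtype.val '' (Ψ S).2 :=
        ⟨⟨g t, hbnd S t ht⟩, by show g.symm (g t) ∈ S.val; simpa using ht, rfl⟩
      rw [h12] at hmem
      obtain ⟨⟨x, hx⟩, hmem2, hval⟩ := hmem
      have : g.symm x ∈ S'.val := hmem2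
      rw [show x = g t from hval] at this
      simpa using this
    have hinj : Function.Injective Ψ := by
      intro S S' hSS
      have h1 : Subtype.val '' (Ψ S).2 = Subtype.val '' (Ψ S').2 := by rw [hSS]
      exact Subtype.ext (Set.Subset.antisymm (key S S' h1) (key S' S h1.symm))
    refine le_trans (Cardinal.mk_le_of_injective hinj) ?_
    rw [Cardinal.mk_sigma]
    refine le_trans (Cardinal.sum_le_sum _ (fun _ => continuum) ?_) ?_
    · intro i
      rw [Cardinal.mk_set]
      exact aux_two_pow_le hpow _ (Cardinal.mk_Iio_ord_toType i)
    · rw [Cardinal.sum_const']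
      rw [Cardinal.mk_ord_toType, Cardinal.mul_eq_self aleph0_le_continuum]

lemma aux_psi {X : Type u} [TopologicalSpace X] [T2Space X] [RegularSpace X]
    (hno : ∀ S : Set X, #↥S = continuum → ¬ StronglyRightSeparated ↥S) (x : X) :
    ∃ V : Set (Set X), #↥V < continuum ∧ (∀ U ∈ V, IsOpen U ∧ x ∈ U) ∧
      ∀ y : X, y ≠ x → ∃ U ∈ V, y ∉ closure U := by
  classical
  set C : Set (Set X) := {W | ∃ U : Set X, IsOpen U ∧ x ∈ U ∧ W = (closure U)ᶜ} with hC
  have hop : ∀ W ∈ C, IsOpen W := by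
    rintro W ⟨U, hU, hx, rfl⟩; exact isClosed_closure.isOpen_compl
  have hcov : ({x}ᶜ : Set X) ⊆ ⋃₀ C := by
    intro y hy
    have hxy : x ≠ y := fun h => hy (by simp [h.symm])
    obtain ⟨U, V', hU, hV', hxU, hyV', hdisj⟩ := t2_separation hxy
    refine ⟨(closure U)ᶜ, ⟨U, hU, hxU, rfl⟩, ?_⟩
    intro hyc
    obtain ⟨z, hzV', hzU⟩ := mem_closure_iff.1 hyc V' hV' hyV'
    exact Set.disjoint_left.1 hdisj hzU hzV'
  obtain ⟨C', hC'sub, hC'card, hC'cov⟩ := aux_lindelof hno ({x}ᶜ) C hop hcov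
  have hch : ∀ W : ↥C', ∃ U : Set X, IsOpen U ∧ x ∈ U ∧ (W : Set X) = (closure U)ᶜ :=
    fun W => hC'sub W.2
  choose ch h1 h2 h3 using hch
  refine ⟨Set.range ch, lt_of_le_of_lt Cardinal.mk_range_le hC'card, ?_, ?_⟩
  · rintro U ⟨W, rfl⟩; exact ⟨h1 W, h2 W⟩
  · intro y hy
    obtain ⟨W, hWC', hyW⟩ := hC'cov hy
    refine ⟨ch ⟨W, hWC'⟩, ⟨⟨W, hWC'⟩, rfl⟩, ?_⟩
    have h4 : W = (closure (ch ⟨W, hWC'⟩))ᶜ := h3 ⟨W, hWC'⟩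
    rw [h4] at hyW
    exact hyW

lemma aux_count_subsets {T : Type u}
    (hpow : ∀ lam : Cardinal.{u}, ℵ₀ ≤ lam → lam < continuum → (2 : Cardinal) ^ lam = continuum)
    (P : Set T) (hP : #↥P ≤ continuum.{u}) :
    #↥{Q : Set T | Q ⊆ P ∧ #↥Q < continuum} ≤ continuum := by
  have h0 := aux_count (T := ↥P) hpow hP
  refine le_trans (Cardinal.mk_le_of_injective
    (f := fun Q : ↥{Q : Set T | Q ⊆ P ∧ #↥Q < continuum} =>
      (⟨Subtype.val ⁻¹' (Q : Set T),
        lt_of_le_of_lt (Cardinal.mk_preimage_of_injective _ _ Subtype.val_injective) Q.2.2⟩ :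
        {S : Set ↥P // #↥S < continuum})) ?_) h0
  intro Q Q' hQQ
  have h1 : Subtype.val ⁻¹' (Q : Set T) = Subtype.val ⁻¹' (Q' : Set T) :=
    congrArg Subtype.val hQQ
  apply Subtype.ext
  ext t
  constructor
  · intro ht
    have hm : (⟨t, Q.2.1 ht⟩ : ↥P) ∈ Subtype.val ⁻¹' (Q : Set T) := ht
    rw [h1] at hm
    exact hm
  · intro ht
    have hm : (⟨t, Q'.2.1 ht⟩ : ↥P) ∈ Subtype.val ⁻¹' (Q' : Set T) := ht
    rw [← h1] at hm
    exact hm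

lemma aux_small {X : Type u} [TopologicalSpace X] [T2Space X] [RegularSpace X] [Nonempty X]
    (hpow : ∀ lam : Cardinal.{u}, ℵ₀ ≤ lam → lam < continuum → (2 : Cardinal) ^ lam = continuum)
    (hnoR : ∀ S : Set X, #↥S = continuum → ¬ StronglyRightSeparated ↥S) :
    Cardinal.mk X ≤ continuum.{u} := by
  classical
  choose V hVcard hVopen hVsep using aux_psi hnoR
  haveI hwo : IsWellOrder (continuum.{u}.ord.ToType) (· < ·) := isWellOrder_lt
  have wf : WellFounded ((· < ·) : continuum.{u}.ord.ToType → _ → Prop) := IsWellFounded.wf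
  have hpickex : ∀ 𝒲 : Set (Set X), ∃ z : X,
      (∃ w : X, w ∉ ⋃ W ∈ 𝒲, closure W) → z ∉ ⋃ W ∈ 𝒲, closure W := by
    intro 𝒲
    by_cases h : ∃ w : X, w ∉ ⋃ W ∈ 𝒲, closure W
    · obtain ⟨w, hw⟩ := h; exact ⟨w, fun _ => hw⟩
    · exact ⟨Classical.arbitrary X, fun hc => absurd hc h⟩
  choose pick hpickspec using hpickex
  set Bad : Set X → Set (Set (Set X)) := fun S =>
    {𝒲 : Set (Set X) | 𝒲 ⊆ (⋃ a ∈ S, V a) ∧ #↥𝒲 < continuum ∧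
      ∃ z : X, z ∉ ⋃ W ∈ 𝒲, closure W} with hBad
  set A : continuum.{u}.ord.ToType → Set X :=
    wf.fix (fun i IH => (⋃ j, ⋃ h : j < i, IH j h) ∪
      pick '' (Bad (⋃ j, ⋃ h : j < i, IH j h))) with hA
  have hfix : ∀ i, A i = (⋃ j ∈ {j | j < i}, A j) ∪
      pick '' (Bad (⋃ j ∈ {j | j < i}, A j)) := by
    intro i
    rw [hA]
    exact WellFounded.fix_eq wf _ i
  have hcard : ∀ i, #↥(A i) ≤ continuum := by
    refine fun i => wf.induction (C := fun i => #↥(A i) ≤ continuum) i ?_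
    intro i IH
    rw [hfix i]
    have hprev : #↥(⋃ j ∈ {j | j < i}, A j) ≤ continuum := by
      refine le_trans (Cardinal.mk_biUnion_le _ _) ?_
      refine le_trans (mul_le_mul'
        (le_of_lt (Cardinal.mk_Iio_ord_toType i)) (ciSup_le' fun j => IH j j.2)) ?_
      rw [Cardinal.mul_eq_self aleph0_le_continuum]
    have hVS : #↥(⋃ a ∈ (⋃ j ∈ {j | j < i}, A j), V a) ≤ continuum := by
      refine le_trans (Cardinal.mk_biUnion_le _ _) ?_
      refine le_trans (mul_le_mul' hprev (ciSup_le' fun a => (hVcard a.1).le)) ?_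
      rw [Cardinal.mul_eq_self aleph0_le_continuum]
    have hBadcard : #↥(Bad (⋃ j ∈ {j | j < i}, A j)) ≤ continuum := by
      refine le_trans (Cardinal.mk_le_mk_of_subset ?_)
        (aux_count_subsets hpow (⋃ a ∈ (⋃ j ∈ {j | j < i}, A j), V a) hVS)
      intro 𝒲 h𝒲
      exact ⟨h𝒲.1, h𝒲.2.1⟩
    refine le_trans (Cardinal.mk_union_le _ _) ?_
    refine le_trans (add_le_add hprev (le_trans Cardinal.mk_image_le hBadcard)) ?_
    rw [Cardinal.add_eq_self aleph0_le_continuum]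
  have hAinfcard : #↥(⋃ i, A i) ≤ continuum := by
    refine le_trans (Cardinal.mk_iUnion_le _) ?_
    refine le_trans (mul_le_mul'
      (le_of_eq (Cardinal.mk_ord_toType continuum)) (ciSup_le' fun i => hcard i)) ?_
    rw [Cardinal.mul_eq_self aleph0_le_continuum]
  have hall : ∀ q : X, q ∈ ⋃ i, A i := by
    intro q
    by_contra hq
    set C : Set (Set X) := {W | (∃ a ∈ ⋃ i, A i, W ∈ V a) ∧ q ∉ closure W} with hCdef
    have hop : ∀ W ∈ C, IsOpen W := by
      rintro W ⟨⟨a, ha, hWa⟩, hqW⟩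
      exact (hVopen a W hWa).1
    have hcov : (⋃ i, A i) ⊆ ⋃₀ C := by
      intro a ha
      obtain ⟨U, hUV, hqU⟩ := hVsep a q (fun h => hq (h ▸ ha))
      exact ⟨U, ⟨⟨a, ha, hUV⟩, hqU⟩, (hVopen a U hUV).2⟩
    obtain ⟨C', hC'sub, hC'card, hC'cov⟩ := aux_lindelof hnoR (⋃ i, A i) C hop hcov
    have hst : ∀ W : ↥C', ∃ j, ∃ a, a ∈ A j ∧ (W : Set X) ∈ V a := by
      intro W
      obtain ⟨⟨a, ha, hWa⟩, -⟩ := hC'sub W.2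
      obtain ⟨j, hj⟩ := Set.mem_iUnion.1 ha
      exact ⟨j, a, hj, hWa⟩
    choose jd ad had hWad using hst
    have hqnot : ∀ W ∈ C', q ∉ closure W := fun W hW => (hC'sub hW).2
    have hbadq : ∃ z : X, z ∉ ⋃ W ∈ C', closure W := by
      refine ⟨q, ?_⟩
      intro hqin
      obtain ⟨W, hW, hqW⟩ := Set.mem_iUnion₂.1 hqin
      exact hqnot W hW hqW
    have hbnd : ∃ i, ∀ W : ↥C', jd W < i := by
      have hlt : #↥(Set.range jd) < (@Ordinal.type (continuum.{u}.ord.ToType) (· < ·) hwo).cof := by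
        have hc : (@Ordinal.type (continuum.{u}.ord.ToType) (· < ·) hwo).cof = continuum := by
          rw [Ordinal.type_toType]; exact aux_reg hpow
        rw [hc]
        exact lt_of_le_of_lt Cardinal.mk_range_le hC'card
      obtain ⟨i, hi⟩ := aux_lt_cof hwo hlt
      exact ⟨i, fun W => hi (jd W) ⟨W, rfl⟩⟩
    obtain ⟨i, hi⟩ := hbnd
    have h𝒲 : C' ∈ Bad (⋃ j ∈ {j | j < i}, A j) := by
      refine ⟨?_, hC'card, hbadq⟩
      intro W hW
      exact Set.mem_biUnion
        (Set.mem_biUnion (hi ⟨W, hW⟩) (had ⟨W, hW⟩)) (hWad ⟨W, hW⟩)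
    have hpickA : pick C' ∈ A i := by
      rw [hfix i]
      exact Or.inr (Set.mem_image_of_mem pick h𝒲)
    have hpickprop : pick C' ∉ ⋃ W ∈ C', closure W := hpickspec C' hbadq
    obtain ⟨W, hWC', hmem⟩ := hC'cov (Set.mem_iUnion.2 ⟨i, hpickA⟩)
    exact hpickprop (Set.mem_biUnion hWC' (subset_closure hmem))
  calc #X = #↥(Set.univ : Set X) := Cardinal.mk_univ.symm
    _ ≤ #↥(⋃ i, A i) := Cardinal.mk_le_mk_of_subset (fun q _ => hall q)
    _ ≤ continuum := hAinfcard

lemma aux_step {X : Type u} [TopologicalSpace X] [T2Space X] [RegularSpace X]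
    (O : {O : Set X // IsOpen O ∧ O.Infinite}) :
    ∃ p : {O : Set X // IsOpen O ∧ O.Infinite} × Set X,
      IsOpen p.2 ∧ p.2.Nonempty ∧ p.2 ⊆ O.1 ∧ p.1.1 ⊆ O.1 ∧ Disjoint p.2 p.1.1 := by
  obtain ⟨x, hx, y, hy, hxy⟩ := O.2.2.nontrivial
  obtain ⟨u, v, hu, hv, hxu, hyv, huv⟩ := t2_separation hxy
  have key : ∀ z : X, z ∈ O.1 → ∀ w : Set X, IsOpen w → z ∈ w →
      (O.1 \ (w ∩ O.1)).Infinite →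
      ∃ p : {O : Set X // IsOpen O ∧ O.Infinite} × Set X,
      IsOpen p.2 ∧ p.2.Nonempty ∧ p.2 ⊆ O.1 ∧ p.1.1 ⊆ O.1 ∧ Disjoint p.2 p.1.1 := by
    intro z hz w hw hzw hinf
    have hmem : w ∩ O.1 ∈ nhds z := (hw.inter O.2.1).mem_nhds ⟨hzw, hz⟩
    obtain ⟨W, ⟨hWn, hWc⟩, hWU⟩ := (closed_nhds_basis z).mem_iff.1 hmem
    refine ⟨(⟨O.1 \ W, O.2.1.sdiff hWc, ?_⟩, interior W), isOpen_interior,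
      ⟨z, mem_interior_iff_mem_nhds.2 hWn⟩, ?_, Set.diff_subset, ?_⟩
    · exact hinf.mono (fun a ha => ⟨ha.1, fun hW => ha.2 (hWU hW)⟩)
    · exact fun a ha => (hWU (interior_subset ha)).2
    · exact Set.disjoint_sdiff_right.mono_left interior_subset
  have hsplit : (O.1 \ (u ∩ O.1)).Infinite ∨ (O.1 \ (v ∩ O.1)).Infinite := by
    rw [← Set.infinite_union]
    refine Set.Infinite.mono (fun z hz => ?_) O.2.2
    by_cases hzu : z ∈ u
    · exact Or.inr ⟨hz, fun hm => Set.disjoint_left.1 huv hzu hm.1⟩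
    · exact Or.inl ⟨hz, fun hm => hzu hm.1⟩
  rcases hsplit with h | h
  · exact key x hx u hu hxu h
  · exact key y hy v hv hyv h

lemma aux_lower {X : Type u} [TopologicalSpace X] [T2Space X] [RegularSpace X] [Infinite X] :
    continuum.{u} ≤ #{U : Set X // IsOpen U} := by
  classical
  have hstep := fun O => aux_step (X := X) O
  choose F hF1 hF2 hF3 hF4 hF5 using hstep
  set st : ℕ → {O : Set X // IsOpen O ∧ O.Infinite} :=
    fun n => Nat.rec ⟨Set.univ, isOpen_univ, Set.infinite_univ⟩ (fun _ s => (F s).1) n with hst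
  set U : ℕ → Set X := fun n => (F (st n)).2 with hU
  have hstep1 : ∀ n, st (n + 1) = (F (st n)).1 := fun n => rfl
  have hmono : ∀ n m, n ≤ m → (st m).1 ⊆ (st n).1 := by
    intro n m hnm
    induction m with
    | zero =>
        obtain rfl := Nat.le_zero.1 hnm
        exact fun a ha => ha
    | succ k ih =>
        rcases Nat.lt_or_ge n (k + 1) with h | h
        · refine fun a ha => ih (Nat.lt_succ_iff.1 h) ?_
          rw [hstep1 k] at ha
          exact hF4 (st k) ha
        · obtain rfl : n = k + 1 := Nat.le_antisymm hnm h
          exact fun a ha => ha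
  have hdisj : ∀ n m, n < m → Disjoint (U n) (U m) := by
    intro n m hnm
    refine (hF5 (st n)).mono_right ?_
    have h1 : U m ⊆ (st m).1 := hF3 (st m)
    have h2 : (st m).1 ⊆ (st (n + 1)).1 := hmono (n + 1) m hnm
    rw [hstep1 n] at h2
    exact h1.trans h2
  set G : Set (ULift.{u} ℕ) → {U : Set X // IsOpen U} :=
    fun s => ⟨⋃ n ∈ s, U n.down, isOpen_biUnion (fun n _ => hF1 (st n.down))⟩ with hG
  have hkey : ∀ s t : Set (ULift.{u} ℕ), G s = G t → s ⊆ t := by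
    intro s t hst' n hn
    obtain ⟨x, hxU⟩ := hF2 (st n.down)
    have hx1 : x ∈ ⋃ m ∈ s, U m.down := Set.mem_biUnion hn hxU
    have hval : (G s).val = (G t).val := congrArg Subtype.val hst'
    have hx2 : x ∈ (G t).val := hval ▸ (hx1 : x ∈ (G s).val)
    obtain ⟨m, hm, hxm⟩ := Set.mem_iUnion₂.1 (hx2 : x ∈ ⋃ m ∈ t, U m.down)
    rcases eq_or_ne n m with rfl | hne
    · exact hm
    · exfalso
      rcases Nat.lt_trichotomy n.down m.down with hlt | heq | hgt
      · exact Set.disjoint_left.1 (hdisj _ _ hlt) hxU hxm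
      · exact hne (ULift.ext _ _ heq)
      · exact Set.disjoint_left.1 (hdisj _ _ hgt) hxm hxU
  have hGinj : Function.Injective G := fun s t h =>
    Set.Subset.antisymm (hkey s t h) (hkey t s h.symm)
  have hc : #(Set (ULift.{u} ℕ)) = continuum := by
    rw [Cardinal.mk_set, Cardinal.mk_uLift, Cardinal.mk_nat, Cardinal.lift_aleph0,
      Cardinal.two_power_aleph0]
  rw [← hc]
  exact Cardinal.mk_le_of_injective hGinj

/-- Assume `2^λ = 𝔠` for every infinite cardinal `λ < 𝔠`, and assume that every strongly
separated topological space of cardinality `𝔠` contains an uncountable discrete subspace.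
Then every infinite regular Hausdorff space `X` of countable spread satisfies `o(X) = 𝔠`:
the family of all open subsets of `X` has cardinality exactly `𝔠`. -/
theorem stmt5 {X : Type u} [TopologicalSpace X] [T2Space X] [RegularSpace X] [Infinite X]
    (hpow : ∀ lam : Cardinal.{u}, ℵ₀ ≤ lam → lam < continuum → (2 : Cardinal) ^ lam = continuum)
    (hss : ∀ (Y : Type u) [TopologicalSpace Y], Cardinal.mk Y = continuum →
      StronglySeparated Y → ∃ D : Set Y, ¬ D.Countable ∧ DiscreteTopology D)
    (hspread : ∀ D : Set X, DiscreteTopology D → D.Countable) :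
    Cardinal.mk {U : Set X // IsOpen U} = continuum := by
  classical
  have hnoSS : ∀ S : Set X, #↥S = continuum → ¬ StronglySeparated ↥S := by
    intro S hcard hsep
    obtain ⟨D, hDc, hDd⟩ := hss ↥S hcard hsep
    have hdisc := aux_discrete_image S D hDd
    have hc := hspread _ hdisc
    exact hDc (Set.Countable.mono (Set.subset_preimage_image _ _)
      (hc.preimage Subtype.val_injective))
  have hnoL : ∀ S : Set X, #↥S = continuum → ¬ StronglyLeftSeparated ↥S :=
    fun S h hl => hnoSS S h (Or.inl hl)
  have hnoR : ∀ S : Set X, #↥S = continuum → ¬ StronglyRightSeparated ↥S :=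
    fun S h hr => hnoSS S h (Or.inr hr)
  have hX : #X ≤ continuum := aux_small hpow hnoR
  have hupper : #{U : Set X // IsOpen U} ≤ continuum := by
    have hd : ∀ U : {U : Set X // IsOpen U},
        ∃ D : Set X, D ⊆ U.1ᶜ ∧ #↥D < continuum ∧ U.1ᶜ ⊆ closure D :=
      fun U => aux_left hnoL U.1ᶜ
    choose Dd hD1 hD2 hD3 using hd
    have hDval : ∀ U, closure (Dd U) = U.1ᶜ := fun U =>
      subset_antisymm (closure_minimal (hD1 U) (isClosed_compl_iff.2 U.2)) (hD3 U)
    have hinj : Function.Injective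
        (fun U : {U : Set X // IsOpen U} =>
          (⟨Dd U, hD2 U⟩ : {S : Set X // #↥S < continuum})) := by
      intro U U' h
      have h1 : Dd U = Dd U' := congrArg Subtype.val h
      apply Subtype.ext
      have h2 := hDval U
      rw [h1, hDval U'] at h2
      exact (compl_inj_iff.1 h2).symm
    exact le_trans (Cardinal.mk_le_of_injective hinj) (aux_count hpow hX)
  exact le_antisymm hupper aux_lower
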